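/- Let L ⊆ M^{m×n}(ℝ) be a linear subspace with no nonzero rank-1 matrix and let A be the orthogonal projection onto L^⊥. Then A satisfies the strict Legendre–Hadamard condition: there exists μ > 0 such that ⟨a ⊗ b, A(a ⊗ b)⟩ ≥ μ |a|² |b|² for all a ∈ ℝ^m, b ∈ ℝ^n. -/

import Mathlib

open scoped RealInnerProductSpace

/-- The `m × n` matrix `a ⊗ b` with entries `aᵢ bⱼ`, in Frobenius space. -/
noncomputable def matTensor {m n : ℕ} (a : EuclideanSpace ℝ (Fin m))
    (b : EuclideanSpace ℝ (Fin n)) : EuclideanSpace ℝ (Fin m × Fin n) :=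
  WithLp.toLp 2 (fun p => a p.1 * b p.2)

lemma matTensor_smul_smul {m n : ℕ} (c d : ℝ) (a : EuclideanSpace ℝ (Fin m))
    (b : EuclideanSpace ℝ (Fin n)) :
    matTensor (c • a) (d • b) = (c * d) • matTensor a b := by
  ext p
  simp [matTensor, PiLp.smul_apply, smul_eq_mul]
  ring

lemma inner_orthProj_eq_norm_sq {E : Type*} [NormedAddCommGroup E] [InnerProductSpace ℝ E]
    (K : Submodule ℝ E) [K.HasOrthogonalProjection] (v : E) :
    ⟪v, (K.orthogonalProjectionOnto v : E)⟫ = ‖(K.orthogonalProjectionOnto v : E)‖ ^ 2 := by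
  have h : ⟪v - (K.orthogonalProjectionOnto v : E), (K.orthogonalProjectionOnto v : E)⟫ = 0 :=
    K.starProjection_inner_eq_zero v _ (K.orthogonalProjectionOnto v).2
  rw [inner_sub_left, sub_eq_zero] at h
  rw [h, real_inner_self_eq_norm_sq]

lemma continuous_matTensor {m n : ℕ} :
    Continuous (fun x : EuclideanSpace ℝ (Fin m) × EuclideanSpace ℝ (Fin n) =>
      matTensor x.1 x.2) := by
  apply (PiLp.continuous_toLp 2 (fun _ : Fin m × Fin n => ℝ)).comp
  apply continuous_pi
  intro p
  exact (((continuous_apply p.1).comp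
      ((PiLp.continuous_ofLp 2 (fun _ : Fin m => ℝ)).comp continuous_fst)).mul
    (((continuous_apply p.2).comp
      ((PiLp.continuous_ofLp 2 (fun _ : Fin n => ℝ)).comp continuous_snd))))

/-- If `L` has no nonzero rank-1 matrix and `A` is the orthogonal projection onto `L^⊥`,
then `A` satisfies the strict Legendre–Hadamard condition:
`⟨a ⊗ b, A(a ⊗ b)⟩ ≥ μ |a|² |b|²` for some `μ > 0`. -/
theorem stmt_5 {m n : ℕ} (L : Submodule ℝ (EuclideanSpace ℝ (Fin m × Fin n)))
    (hL : ∀ (a : EuclideanSpace ℝ (Fin m)) (b : EuclideanSpace ℝ (Fin n)),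
      matTensor a b ∈ L → a = 0 ∨ b = 0) :
    ∃ μ : ℝ, 0 < μ ∧
      ∀ (a : EuclideanSpace ℝ (Fin m)) (b : EuclideanSpace ℝ (Fin n)),
        ⟪matTensor a b,
          (Lᗮ.orthogonalProjectionOnto (matTensor a b) : EuclideanSpace ℝ (Fin m × Fin n))⟫ ≥
          μ * ‖a‖ ^ 2 * ‖b‖ ^ 2 := by
  classical
  set E := EuclideanSpace ℝ (Fin m)
  set F := EuclideanSpace ℝ (Fin n)
  set G := EuclideanSpace ℝ (Fin m × Fin n)
  -- trivial cases: a = 0 or b = 0 give equality 0 ≥ 0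
  have key0 : ∀ (a : E) (b : F), a = 0 ∨ b = 0 →
      ⟪matTensor a b, (Lᗮ.orthogonalProjectionOnto (matTensor a b) : G)⟫ = 0 := by
    intro a b hab
    have hT : matTensor a b = 0 := by
      ext p
      rcases hab with h | h
      · subst h; show (0 : E) p.1 * b p.2 = 0
        rw [show (0 : E) p.1 = 0 from rfl, zero_mul]
      · subst h; show a p.1 * (0 : F) p.2 = 0
        rw [show (0 : F) p.2 = 0 from rfl, mul_zero]
    rw [hT]
    simp
  rcases Nat.eq_zero_or_pos m with hm | hm
  · refine ⟨1, one_pos, fun a b => ?_⟩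
    subst hm
    have ha : a = 0 := Subsingleton.elim a 0
    rw [key0 a b (Or.inl ha), ha]
    simp
  rcases Nat.eq_zero_or_pos n with hn | hn
  · refine ⟨1, one_pos, fun a b => ?_⟩
    subst hn
    have hb : b = 0 := Subsingleton.elim b 0
    rw [key0 a b (Or.inr hb), hb]
    simp
  -- main case
  set S : Set (E × F) := Metric.sphere 0 1 ×ˢ Metric.sphere 0 1 with hS
  have hScompact : IsCompact S := (isCompact_sphere 0 1).prod (isCompact_sphere 0 1)
  have hSne : S.Nonempty := by
    refine ⟨(EuclideanSpace.single ⟨0, hm⟩ (1 : ℝ), EuclideanSpace.single ⟨0, hn⟩ (1 : ℝ)), ?_, ?_⟩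
    · rw [mem_sphere_zero_iff_norm, EuclideanSpace.norm_single]; exact norm_one
    · rw [mem_sphere_zero_iff_norm, EuclideanSpace.norm_single]; exact norm_one
  set f : E × F → ℝ := fun x =>
    ‖(Lᗮ.orthogonalProjectionOnto (matTensor x.1 x.2) : G)‖ ^ 2 with hf
  have hfcont : Continuous f := by
    apply Continuous.pow
    apply Continuous.norm
    exact (continuous_subtype_val.comp
      (ContinuousLinearMap.continuous _)).comp continuous_matTensor
  obtain ⟨x₀, hx₀S, hx₀min⟩ := hScompact.exists_isMinOn hSne hfcont.continuousOn
  have hμpos : 0 < f x₀ := by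
    rcases hx₀S with ⟨ha₀, hb₀⟩
    have ha₀' : ‖x₀.1‖ = 1 := by simpa using ha₀
    have hb₀' : ‖x₀.2‖ = 1 := by simpa using hb₀
    have hne : (Lᗮ.orthogonalProjectionOnto (matTensor x₀.1 x₀.2) : G) ≠ 0 := by
      intro h0
      have h0' : Lᗮ.orthogonalProjectionOnto (matTensor x₀.1 x₀.2) = 0 := by
        exact Subtype.ext h0
      rw [Submodule.orthogonalProjectionOnto_eq_zero_iff] at h0'
      rw [Submodule.orthogonal_orthogonal] at h0'
      rcases hL _ _ h0' with h | h
      · rw [h] at ha₀'; simp at ha₀'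
      · rw [h] at hb₀'; simp at hb₀'
    exact pow_pos (norm_pos_iff.mpr hne) 2
  refine ⟨f x₀, hμpos, fun a b => ?_⟩
  rcases eq_or_ne a 0 with ha | ha
  · rw [key0 a b (Or.inl ha), ha]; simp
  rcases eq_or_ne b 0 with hb | hb
  · rw [key0 a b (Or.inr hb), hb]; simp
  have hna : ‖a‖ ≠ 0 := norm_ne_zero_iff.2 ha
  have hnb : ‖b‖ ≠ 0 := norm_ne_zero_iff.2 hb
  set a' : E := ‖a‖⁻¹ • a with ha'
  set b' : F := ‖b‖⁻¹ • b with hb'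
  have ha'S : a' ∈ Metric.sphere (0 : E) 1 := by
    simp [ha', norm_smul, abs_of_nonneg (inv_nonneg.2 (norm_nonneg a)),
      inv_mul_cancel₀ hna]
  have hb'S : b' ∈ Metric.sphere (0 : F) 1 := by
    simp [hb', norm_smul, abs_of_nonneg (inv_nonneg.2 (norm_nonneg b)),
      inv_mul_cancel₀ hnb]
  have hmin := hx₀min (Set.mk_mem_prod ha'S hb'S)
  have hT : matTensor a b = (‖a‖ * ‖b‖) • matTensor a' b' := by
    rw [ha', hb', matTensor_smul_smul, smul_smul]
    rw [show ‖a‖ * ‖b‖ * (‖a‖⁻¹ * ‖b‖⁻¹) = (‖a‖ * ‖a‖⁻¹) * (‖b‖ * ‖b‖⁻¹) by ring,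
      mul_inv_cancel₀ hna, mul_inv_cancel₀ hnb, one_mul, one_smul]
  rw [inner_orthProj_eq_norm_sq, hT, map_smul]
  have : ‖((‖a‖ * ‖b‖) • Lᗮ.orthogonalProjectionOnto (matTensor a' b') : G)‖ ^ 2 =
      (‖a‖ * ‖b‖) ^ 2 * f (a', b') := by
    rw [hf]
    push_cast
    rw [norm_smul]
    rw [Real.norm_eq_abs, abs_of_nonneg (by positivity), mul_pow]
  rw [show (((‖a‖ * ‖b‖) • Lᗮ.orthogonalProjectionOnto (matTensor a' b') : Lᗮ) : G) =
      (‖a‖ * ‖b‖) • (Lᗮ.orthogonalProjectionOnto (matTensor a' b') : G) from rfl, this]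
  calc (‖a‖ * ‖b‖) ^ 2 * f (a', b') ≥ (‖a‖ * ‖b‖) ^ 2 * f x₀ := by
        apply mul_le_mul_of_nonneg_left hmin (by positivity)
    _ = f x₀ * ‖a‖ ^ 2 * ‖b‖ ^ 2 := by ring
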